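/- Fix W, W̃ ∈ ℂ^{n×n} and ε ≥ 0. If W̃ is a unit-circle ε-approximation of W, then for every positive integer k, C_k ⊗ W̃ is a unit-circle ε-approximation of C_k ⊗ W. -/

import Mathlib

open Matrix Kronecker

noncomputable section

/-- The sesquilinear form `x* A y`. -/
def sesq {m : Type*} [Fintype m] (A : Matrix m m ℂ) (x y : m → ℂ) : ℂ :=
  star x ⬝ᵥ (A *ᵥ y)

/-- The squared Euclidean norm of a complex vector. -/
def vnormSq {m : Type*} [Fintype m] (x : m → ℂ) : ℝ :=
  ∑ i, Complex.normSq (x i)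

/-- `W̃` is a *unit-circle ε-approximation* of `W`. -/
def UnitCircleApprox {m : Type*} [Fintype m] (ε : ℝ) (W Wt : Matrix m m ℂ) : Prop :=
  ∀ x y : m → ℂ,
    ‖sesq (W - Wt) x y‖ ≤
      ε / 2 * (vnormSq x + vnormSq y - ‖sesq W x x + sesq W y y‖)

/-- Transition matrix of the directed `k`-cycle (over `ℂ`):
`(C_k)_{ij} = 1` iff `i ≡ j+1 (mod k)`. -/
def cycleC (k : ℕ) : Matrix (Fin k) (Fin k) ℂ :=
  Matrix.of fun i j => if (i : ℕ) = ((j : ℕ) + 1) % k then 1 else 0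

namespace CycleAux

open Complex Finset

/-- primitive k-th root of unity -/
def ω (k : ℕ) : ℂ := Complex.exp (2 * Real.pi * Complex.I / k)

lemma hprim {k : ℕ} (hk : 0 < k) : IsPrimitiveRoot (ω k) k :=
  Complex.isPrimitiveRoot_exp k hk.ne'

lemma abs_ω (k : ℕ) : ‖ω k‖ = 1 := by
  have : (2 * (Real.pi : ℂ) * Complex.I / k) = ((2 * Real.pi / k : ℝ) : ℂ) * Complex.I := by
    push_cast; ring
  rw [ω, this, Complex.norm_exp_ofReal_mul_I]

lemma conj_pow_ω (k m : ℕ) : (starRingEnd ℂ) ((ω k) ^ m) = ((ω k) ^ m)⁻¹ := by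
  rw [← Complex.inv_eq_conj]
  simp [abs_ω]

lemma conj_inv_pow_ω (k m : ℕ) : (starRingEnd ℂ) (((ω k) ^ m)⁻¹) = (ω k) ^ m := by
  rw [← Complex.inv_eq_conj, inv_inv]
  simp [abs_ω]

lemma pow_ω_ne_zero (k m : ℕ) : (ω k) ^ m ≠ 0 := by
  apply pow_ne_zero
  intro h
  have := abs_ω k
  rw [h] at this; simp at this

lemma ortho {k : ℕ} (hk : 0 < k) (a b : ℕ) :
    ∑ l : Fin k, (ω k) ^ ((l : ℕ) * a) * ((ω k) ^ ((l : ℕ) * b))⁻¹ =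
      if a % k = b % k then (k : ℂ) else 0 := by
  have hmod : ∀ m : ℕ, (ω k) ^ m = (ω k) ^ (m % k) := by
    intro m
    conv_lhs => rw [← Nat.mod_add_div m k]
    rw [pow_add, pow_mul, (hprim hk).pow_eq_one, one_pow, mul_one]
  set z : ℂ := (ω k) ^ a * ((ω k) ^ b)⁻¹ with hz
  have hterm : ∀ l : Fin k,
      (ω k) ^ ((l : ℕ) * a) * ((ω k) ^ ((l : ℕ) * b))⁻¹ = z ^ (l : ℕ) := by
    intro l
    rw [hz, mul_pow, inv_pow, ← pow_mul, ← pow_mul, mul_comm a (l : ℕ), mul_comm b (l : ℕ)]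
  rw [Finset.sum_congr rfl (fun l _ => hterm l)]
  have hsum : ∑ l : Fin k, z ^ (l : ℕ) = ∑ i ∈ Finset.range k, z ^ i :=
    Fin.sum_univ_eq_sum_range _ k
  have hz1 : z = 1 ↔ a % k = b % k := by
    rw [hz, mul_inv_eq_one₀ (pow_ω_ne_zero k b)]
    constructor
    · intro hab
      rw [hmod a, hmod b] at hab
      exact (hprim hk).pow_inj (Nat.mod_lt _ hk) (Nat.mod_lt _ hk) hab
    · intro hab
      rw [hmod a, hmod b, hab]
  by_cases hcase : a % k = b % k
  · rw [if_pos hcase]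
    have : z = 1 := hz1.mpr hcase
    rw [hsum, this]
    simp
  · rw [if_neg hcase]
    have hzne : z ≠ 1 := fun h => hcase (hz1.mp h)
    have hzk : z ^ k = 1 := by
      rw [hz, mul_pow, inv_pow, ← pow_mul, ← pow_mul, mul_comm a k, mul_comm b k,
        pow_mul, pow_mul, (hprim hk).pow_eq_one, one_pow, one_pow]
      simp
    rw [hsum, geom_sum_eq hzne, hzk]
    simp

/-- Fourier transform of a vector on the cycle-lifted space. -/
def ft (k n : ℕ) (x : Fin k × Fin n → ℂ) (l : Fin k) (a : Fin n) : ℂ :=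
  ∑ j : Fin k, ((ω k) ^ ((l : ℕ) * (j : ℕ)))⁻¹ * x (j, a)


def slice (k n : ℕ) (x : Fin k × Fin n → ℂ) (j : Fin k) : Fin n → ℂ := fun a => x (j, a)

lemma sum_rotate4 {i1 i2 i3 i4 M : Type*} [Fintype i1] [Fintype i2] [Fintype i3] [Fintype i4]
    [AddCommMonoid M] (f : i1 → i2 → i3 → i4 → M) :
    ∑ a, ∑ b, ∑ c, ∑ d, f a b c d = ∑ b, ∑ c, ∑ d, ∑ a, f a b c d := by
  rw [Finset.sum_comm]
  refine Finset.sum_congr rfl fun b _ => ?_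
  rw [Finset.sum_comm]
  refine Finset.sum_congr rfl fun c _ => ?_
  rw [Finset.sum_comm]

lemma kron_sesq {k n : ℕ} (B : Matrix (Fin k) (Fin k) ℂ) (A : Matrix (Fin n) (Fin n) ℂ)
    (x y : Fin k × Fin n → ℂ) :
    sesq (B ⊗ₖ A) x y = ∑ j : Fin k, ∑ j' : Fin k, B j j' * sesq A (slice k n x j) (slice k n y j') := by
  simp only [sesq, dotProduct, mulVec, kroneckerMap_apply, Fintype.sum_prod_type, slice,
    Pi.star_apply, RCLike.star_def, Finset.mul_sum, Finset.sum_mul]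
  refine Finset.sum_congr rfl fun j _ => ?_
  rw [Finset.sum_comm]
  refine Finset.sum_congr rfl fun j' _ => Finset.sum_congr rfl fun a _ => Finset.sum_congr rfl fun b _ => ?_
  ring

lemma sesq_ft {k n : ℕ} (A : Matrix (Fin n) (Fin n) ℂ) (x y : Fin k × Fin n → ℂ) (l : Fin k) :
    sesq A (ft k n x l) (ft k n y l)
      = ∑ j : Fin k, ∑ j' : Fin k,
          (ω k) ^ ((l : ℕ) * (j : ℕ)) * ((ω k) ^ ((l : ℕ) * (j' : ℕ)))⁻¹ *
            sesq A (slice k n x j) (slice k n y j') := by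
  simp only [sesq, dotProduct, mulVec, ft, slice, Pi.star_apply, RCLike.star_def, map_sum,
    _root_.map_mul, conj_inv_pow_ω, Finset.mul_sum, Finset.sum_mul]
  rw [sum_rotate4, sum_rotate4, Finset.sum_comm]
  refine Finset.sum_congr rfl fun j _ => Finset.sum_congr rfl fun j' _ =>
    Finset.sum_congr rfl fun a _ => Finset.sum_congr rfl fun b _ => ?_
  ring


lemma sum_rotate3 {i1 i2 i3 M : Type*} [Fintype i1] [Fintype i2] [Fintype i3]
    [AddCommMonoid M] (f : i1 → i2 → i3 → M) :
    ∑ a, ∑ b, ∑ c, f a b c = ∑ b, ∑ c, ∑ a, f a b c := by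
  rw [Finset.sum_comm]
  refine Finset.sum_congr rfl fun b _ => ?_
  rw [Finset.sum_comm]

lemma key {k n : ℕ} (hk : 0 < k) (A : Matrix (Fin n) (Fin n) ℂ)
    (x y : Fin k × Fin n → ℂ) :
    ∑ l : Fin k, ((ω k) ^ (l : ℕ))⁻¹ * sesq A (ft k n x l) (ft k n y l) =
      (k : ℂ) * sesq (cycleC k ⊗ₖ A) x y := by
  rw [kron_sesq]
  simp only [sesq_ft, Finset.mul_sum]
  rw [sum_rotate3]
  refine Finset.sum_congr rfl fun j _ => Finset.sum_congr rfl fun j' _ => ?_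
  have hterm : ∀ l : Fin k,
      ((ω k) ^ (l : ℕ))⁻¹ * ((ω k) ^ ((l : ℕ) * (j : ℕ)) * ((ω k) ^ ((l : ℕ) * (j' : ℕ)))⁻¹ *
        sesq A (slice k n x j) (slice k n y j'))
      = ((ω k) ^ ((l : ℕ) * (j : ℕ)) * ((ω k) ^ ((l : ℕ) * ((j' : ℕ) + 1)))⁻¹) *
        sesq A (slice k n x j) (slice k n y j') := by
    intro l
    rw [Nat.mul_add, Nat.mul_one, pow_add, mul_inv]
    ring
  rw [Finset.sum_congr rfl fun l _ => hterm l, ← Finset.sum_mul, ortho hk,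
    Nat.mod_eq_of_lt j.isLt, cycleC]
  simp only [Matrix.of_apply]
  split_ifs <;> ring

lemma parseval {k n : ℕ} (hk : 0 < k) (x : Fin k × Fin n → ℂ) :
    ∑ l : Fin k, vnormSq (ft k n x l) = (k : ℝ) * vnormSq x := by
  have hC : ((∑ l : Fin k, vnormSq (ft k n x l) : ℝ) : ℂ)
      = ((((k : ℝ) * vnormSq x : ℝ)) : ℂ) := by
    push_cast [vnormSq]
    simp only [← Complex.mul_conj]
    simp only [ft, Fintype.sum_prod_type, map_sum, _root_.map_mul, conj_inv_pow_ω,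
      Finset.mul_sum, Finset.sum_mul]
    rw [sum_rotate4]
    have h1 : ∀ (a : Fin n) (j' j : Fin k),
        (∑ l : Fin k, ((ω k) ^ ((l : ℕ) * (j : ℕ)))⁻¹ * x (j, a) *
          ((ω k) ^ ((l : ℕ) * (j' : ℕ)) * (starRingEnd ℂ) (x (j', a))))
        = (if j' = j then (k : ℂ) else 0) * (x (j, a) * (starRingEnd ℂ) (x (j', a))) := by
      intro a j' j
      calc (∑ l : Fin k, ((ω k) ^ ((l : ℕ) * (j : ℕ)))⁻¹ * x (j, a) *
            ((ω k) ^ ((l : ℕ) * (j' : ℕ)) * (starRingEnd ℂ) (x (j', a))))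
          = ∑ l : Fin k, ((ω k) ^ ((l : ℕ) * (j' : ℕ)) * ((ω k) ^ ((l : ℕ) * (j : ℕ)))⁻¹) *
              (x (j, a) * (starRingEnd ℂ) (x (j', a))) :=
            Finset.sum_congr rfl fun l _ => by ring
        _ = _ := by
            rw [← Finset.sum_mul, ortho hk, Nat.mod_eq_of_lt j'.isLt, Nat.mod_eq_of_lt j.isLt]
            congr 1
            simp [Fin.val_inj]
    simp only [h1, ite_mul, zero_mul, Finset.sum_ite_eq, Finset.mem_univ, if_true]
    rw [Finset.sum_comm]
  exact_mod_cast hC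

end CycleAux

/-- If `W̃ ∘≈_ε W` then for every positive integer `k`,
`C_k ⊗ W̃ ∘≈_ε C_k ⊗ W`. -/
theorem cycleLift_unitCircle_approx {n : ℕ} (ε : ℝ) (hε : 0 ≤ ε)
    (W Wt : Matrix (Fin n) (Fin n) ℂ) (h : UnitCircleApprox ε W Wt) :
    ∀ k : ℕ, 0 < k → UnitCircleApprox ε (cycleC k ⊗ₖ W) (cycleC k ⊗ₖ Wt) := by
  intro k hk x y
  have hk0 : (0:ℝ) < (k:ℝ) := by exact_mod_cast hk
  set X := CycleAux.ft k n x with hX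
  set Y := CycleAux.ft k n y with hY
  have hsub : cycleC k ⊗ₖ W - cycleC k ⊗ₖ Wt = cycleC k ⊗ₖ (W - Wt) := by
    ext ⟨i, a⟩ ⟨j, b⟩
    simp [Matrix.kroneckerMap_apply, Matrix.sub_apply, mul_sub]
  have habsunit : ∀ l : Fin k, ‖(CycleAux.ω k ^ (l:ℕ))⁻¹‖ = 1 := by
    intro l
    rw [norm_inv, norm_pow, CycleAux.abs_ω, one_pow, inv_one]
  have step1 : (k:ℝ) * ‖sesq (cycleC k ⊗ₖ W - cycleC k ⊗ₖ Wt) x y‖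
      = ‖∑ l : Fin k, (CycleAux.ω k ^ (l:ℕ))⁻¹ * sesq (W - Wt) (X l) (Y l)‖ := by
    rw [CycleAux.key hk (W - Wt) x y, hsub, norm_mul]
    simp
  have step2 : ‖∑ l : Fin k, (CycleAux.ω k ^ (l:ℕ))⁻¹ * sesq (W - Wt) (X l) (Y l)‖
      ≤ ∑ l : Fin k, ‖sesq (W - Wt) (X l) (Y l)‖ := by
    refine le_trans (norm_sum_le _ _) (le_of_eq (Finset.sum_congr rfl fun l _ => ?_))
    rw [norm_mul, habsunit, one_mul]
  have step3 : ∑ l : Fin k, ‖sesq (W - Wt) (X l) (Y l)‖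
      ≤ ∑ l : Fin k, (ε / 2 * (vnormSq (X l) + vnormSq (Y l)
          - ‖sesq W (X l) (X l) + sesq W (Y l) (Y l)‖)) :=
    Finset.sum_le_sum fun l _ => h (X l) (Y l)
  have hq : ‖(k:ℂ) * (sesq (cycleC k ⊗ₖ W) x x + sesq (cycleC k ⊗ₖ W) y y)‖
      ≤ ∑ l : Fin k, ‖sesq W (X l) (X l) + sesq W (Y l) (Y l)‖ := by
    have hrw : (k:ℂ) * (sesq (cycleC k ⊗ₖ W) x x + sesq (cycleC k ⊗ₖ W) y y)
        = ∑ l : Fin k, (CycleAux.ω k ^ (l:ℕ))⁻¹ *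
            (sesq W (X l) (X l) + sesq W (Y l) (Y l)) := by
      rw [mul_add, ← CycleAux.key hk W x x, ← CycleAux.key hk W y y,
        ← Finset.sum_add_distrib]
      exact Finset.sum_congr rfl fun l _ => by ring
    rw [hrw]
    refine le_trans (norm_sum_le _ _) (le_of_eq (Finset.sum_congr rfl fun l _ => ?_))
    rw [norm_mul, habsunit, one_mul]
  have habs : (k:ℝ) * ‖sesq (cycleC k ⊗ₖ W) x x + sesq (cycleC k ⊗ₖ W) y y‖
      ≤ ∑ l : Fin k, ‖sesq W (X l) (X l) + sesq W (Y l) (Y l)‖ := by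
    refine le_trans (le_of_eq ?_) hq
    rw [norm_mul]
    simp
  have step4 : ∑ l : Fin k, (ε / 2 * (vnormSq (X l) + vnormSq (Y l)
        - ‖sesq W (X l) (X l) + sesq W (Y l) (Y l)‖))
      ≤ (k:ℝ) * (ε / 2 * (vnormSq x + vnormSq y
          - ‖sesq (cycleC k ⊗ₖ W) x x + sesq (cycleC k ⊗ₖ W) y y‖)) := by
    rw [← Finset.mul_sum]
    have expand : ∑ l : Fin k, (vnormSq (X l) + vnormSq (Y l)
        - ‖sesq W (X l) (X l) + sesq W (Y l) (Y l)‖)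
        = (k:ℝ) * vnormSq x + (k:ℝ) * vnormSq y
          - ∑ l : Fin k, ‖sesq W (X l) (X l) + sesq W (Y l) (Y l)‖ := by
      rw [Finset.sum_sub_distrib, Finset.sum_add_distrib, hX, hY,
        CycleAux.parseval hk, CycleAux.parseval hk]
    rw [expand]
    nlinarith [habs, hε]
  have main : (k:ℝ) * ‖sesq (cycleC k ⊗ₖ W - cycleC k ⊗ₖ Wt) x y‖
      ≤ (k:ℝ) * (ε / 2 * (vnormSq x + vnormSq y
          - ‖sesq (cycleC k ⊗ₖ W) x x + sesq (cycleC k ⊗ₖ W) y y‖)) := by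
    rw [step1]
    exact le_trans step2 (le_trans step3 step4)
  exact le_of_mul_le_mul_left main hk0

end
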